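/- arXiv:1901.10015 — 2 statements merged into one kernel-verified Lean document; each statement's English description precedes it below -/
import Mathlib

section
/- Let φ : (0,∞) → ℝ be continuous, nonnegative, locally integrable, with φ(t) ~ C t^{-α} as t → ∞ for some C > 0 and 0 < α < 1, and with φ integrable near 0. Then the Stieltjes transform K(λ) = ∫₀^∞ φ(t)/(λ+t) dt satisfies K(λ)·λ^{α} → C·π/sin(πα) as λ → ∞. -/
open MeasureTheory Real Set Filter Topology

lemma betaReal (α : ℝ) (hα0 : 0 < α) (hα1 : α < 1) :
    ∫ x in (0:ℝ)..1, x ^ (-α) * (1-x) ^ (α-1) = π / Real.sin (π * α) := by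
  have h1 : (0:ℝ) < 1 - α := by linarith
  have hc : Complex.betaIntegral (1-α) α = ((π / Real.sin (π * α) : ℝ) : ℂ) := by
    have := Complex.Gamma_mul_Gamma_eq_betaIntegral (s := (1-α:ℂ)) (t := (α:ℂ))
      (by simpa using h1) (by simpa using hα0)
    have h2 : (1-α:ℂ) + α = 1 := by ring
    rw [h2, Complex.Gamma_one, one_mul] at this
    rw [← this, mul_comm]
    rw [show ((1:ℂ) - α) = ((1 - α : ℝ) : ℂ) by push_cast; ring]
    rw [Complex.Gamma_ofReal, Complex.Gamma_ofReal, ← Complex.ofReal_mul,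
      Real.Gamma_mul_Gamma_one_sub α]
  have : Complex.betaIntegral (1-α) α
      = ((∫ x in (0:ℝ)..1, x ^ (-α) * (1-x) ^ (α-1) : ℝ) : ℂ) := by
    rw [Complex.betaIntegral, ← intervalIntegral.integral_ofReal]
    refine intervalIntegral.integral_congr fun x hx => ?_
    rw [uIcc_of_le (by norm_num : (0:ℝ) ≤ 1)] at hx
    rw [Complex.ofReal_mul, Complex.ofReal_cpow hx.1, Complex.ofReal_cpow
      (by linarith [hx.2] : (0:ℝ) ≤ 1 - x)]
    push_cast
    ring_nf
  rw [this] at hc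
  exact_mod_cast hc

lemma rint {α : ℝ} (hα0 : 0 < α) (hα1 : α < 1) {l : ℝ} (hl : 0 < l) :
    IntegrableOn (fun t => t ^ (-α) / (l + t)) (Ioi (0:ℝ)) := by
  have h1 : IntegrableOn (fun t => t ^ (-α) / (l + t)) (Ioc (0:ℝ) 1) := by
    have hi : IntegrableOn (fun t : ℝ => t ^ (-α) * l⁻¹) (Ioc (0:ℝ) 1) := by
      apply Integrable.mul_const
      exact (intervalIntegral.intervalIntegrable_rpow' (a := (0:ℝ)) (b := 1)
        (r := -α) (by linarith)).1
    refine hi.mono' ?_ ?_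
    · apply ContinuousOn.aestronglyMeasurable ?_ measurableSet_Ioc
      intro t ht
      exact ((Real.continuousAt_rpow_const t (-α) (Or.inl ht.1.ne')).continuousWithinAt).div
        (continuousWithinAt_const.add continuousWithinAt_id) (by have := ht.1; positivity)
    · filter_upwards [ae_restrict_mem measurableSet_Ioc] with t ht
      have ht0 : 0 < t := ht.1
      rw [norm_div, Real.norm_eq_abs, Real.norm_eq_abs, abs_of_nonneg (by positivity),
        abs_of_pos (by positivity), div_eq_mul_inv]
      gcongr
      linarith
  have h2 : IntegrableOn (fun t => t ^ (-α) / (l + t)) (Ioi (1:ℝ)) := by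
    have hi : IntegrableOn (fun t : ℝ => t ^ (-α - 1)) (Ioi (1:ℝ)) :=
      integrableOn_Ioi_rpow_of_lt (by linarith) one_pos
    refine hi.mono' ?_ ?_
    · apply ContinuousOn.aestronglyMeasurable ?_ measurableSet_Ioi
      intro t ht
      have ht0 : (0:ℝ) < t := lt_trans one_pos ht
      exact ((Real.continuousAt_rpow_const t (-α) (Or.inl ht0.ne')).continuousWithinAt).div
        (continuousWithinAt_const.add continuousWithinAt_id) (by positivity)
    · filter_upwards [ae_restrict_mem measurableSet_Ioi] with t ht
      have ht0 : (0:ℝ) < t := lt_trans one_pos ht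
      rw [Real.norm_eq_abs, abs_of_nonneg (by positivity), Real.rpow_sub ht0,
        Real.rpow_one, div_le_div_iff₀ (by positivity) (by positivity)]
      have : t ^ (-α) * t ≤ t ^ (-α) * (l + t) := by nlinarith [Real.rpow_pos_of_pos ht0 (-α)]
      linarith [this]
  have := h1.union h2
  rwa [Ioc_union_Ioi_eq_Ioi (by norm_num : (0:ℝ) ≤ 1)] at this

lemma rval1 (α : ℝ) (hα0 : 0 < α) (hα1 : α < 1) :
    ∫ t in Ioi (0:ℝ), t ^ (-α) / (1 + t) = π / Real.sin (π * α) := by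
  have himg : (fun x : ℝ => x / (1 - x)) '' Ioo 0 1 = Ioi 0 := by
    ext t
    simp only [mem_image, mem_Ioo, mem_Ioi]
    constructor
    · rintro ⟨x, hx, rfl⟩
      exact div_pos hx.1 (by linarith [hx.2])
    · intro ht
      refine ⟨t / (1 + t), ⟨div_pos ht (by linarith), ?_⟩, ?_⟩
      · rw [div_lt_one (by linarith)]; linarith
      · have h1 : (1:ℝ) + t ≠ 0 := by linarith
        field_simp
        ring
  have hderiv : ∀ x ∈ Ioo (0:ℝ) 1, HasDerivWithinAt (fun x : ℝ => x / (1 - x))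
      (((1 - x) ^ 2)⁻¹) (Ioo 0 1) x := by
    intro x hx
    have h1 : (1:ℝ) - x ≠ 0 := by have := hx.2; intro h; linarith
    have := (hasDerivAt_id x).div ((hasDerivAt_const x 1).sub (hasDerivAt_id x)) h1
    convert this.hasDerivWithinAt using 1
    show ((1 - x) ^ 2)⁻¹ = (1 * (1 - x) - x * (0 - 1)) / (1 - x) ^ 2
    rw [inv_eq_one_div]; congr 1; ring
    all_goals rfl
  have hinj : InjOn (fun x : ℝ => x / (1 - x)) (Ioo 0 1) := by
    intro a ha b hb hab
    have h1 : (1:ℝ) - a ≠ 0 := by have := ha.2; intro h; linarith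
    have h2 : (1:ℝ) - b ≠ 0 := by have := hb.2; intro h; linarith
    simp only at hab
    field_simp at hab
    linarith
  have key := integral_image_eq_integral_abs_deriv_smul measurableSet_Ioo hderiv hinj
    (fun t => t ^ (-α) / (1 + t))
  rw [himg] at key
  rw [key]
  have hcongr : ∫ x in Ioo (0:ℝ) 1, |((1 - x) ^ 2)⁻¹| • ((x / (1-x)) ^ (-α) / (1 + x / (1-x)))
      = ∫ x in Ioo (0:ℝ) 1, x ^ (-α) * (1-x) ^ (α-1) := by
    refine setIntegral_congr_fun measurableSet_Ioo fun x hx => ?_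
    have hx0 : 0 < x := hx.1
    have hx1 : 0 < 1 - x := by linarith [hx.2]
    have e1 : 1 + x / (1 - x) = (1 - x)⁻¹ := by field_simp; ring
    rw [e1, smul_eq_mul, abs_of_nonneg (by positivity), Real.div_rpow hx0.le hx1.le,
      Real.rpow_sub hx1, Real.rpow_one, Real.rpow_neg hx1.le α]
    have hB : (0:ℝ) < (1-x) ^ α := Real.rpow_pos_of_pos hx1 α
    field_simp
  rw [hcongr, ← integral_Ioc_eq_integral_Ioo,
    ← intervalIntegral.integral_of_le (by norm_num : (0:ℝ) ≤ 1), betaReal α hα0 hα1]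

lemma rval (α : ℝ) (hα0 : 0 < α) (hα1 : α < 1) {l : ℝ} (hl : 0 < l) :
    ∫ t in Ioi (0:ℝ), t ^ (-α) / (l + t) = l ^ (-α) * (π / Real.sin (π * α)) := by
  have key := integral_comp_mul_left_Ioi (fun t => t ^ (-α) / (l + t)) 0 hl
  rw [mul_zero] at key
  have hcongr : ∫ x in Ioi (0:ℝ), (l * x) ^ (-α) / (l + l * x)
      = ∫ x in Ioi (0:ℝ), (l ^ (-α) / l) * (x ^ (-α) / (1 + x)) := by
    refine setIntegral_congr_fun measurableSet_Ioi fun x hx => ?_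
    have hx0 : (0:ℝ) < x := hx
    rw [Real.mul_rpow hl.le hx0.le]
    rw [show l + l * x = l * (1 + x) by ring]
    field_simp
  rw [hcongr, integral_const_mul, rval1 α hα0 hα1] at key
  simp only [smul_eq_mul] at key
  have hIl : (∫ t in Ioi (0:ℝ), t ^ (-α) / (l + t))
      = l * (l ^ (-α) / l * (π / Real.sin (π * α))) := by
    rw [key, ← mul_assoc, mul_inv_cancel₀ hl.ne', one_mul]
  rw [hIl]
  field_simp

theorem stieltjes_transform_asymptotics_at_infinity
    (φ : ℝ → ℝ) (C α : ℝ) (hC : 0 < C) (hα0 : 0 < α) (hα1 : α < 1)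
    (hcont : ContinuousOn φ (Ioi 0))
    (hpos : ∀ t : ℝ, 0 < t → 0 ≤ φ t)
    (hint0 : IntegrableOn φ (Ioc (0:ℝ) 1))
    (hasym : Tendsto (fun t => φ t / (C * t ^ (-α))) atTop (𝓝 1)) :
    Tendsto (fun lam => (∫ t in Ioi (0:ℝ), φ t / (lam + t)) * lam ^ α)
      atTop (𝓝 (C * π / Real.sin (π * α))) := by
  set S := π / Real.sin (π * α) with hSdef
  have hS : 0 < S := by
    have hsin : 0 < Real.sin (π * α) := Real.sin_pos_of_pos_of_lt_pi (by positivity)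
      (by nlinarith [Real.pi_pos])
    positivity
  -- tail bound extraction
  have H1 : ∀ δ : ℝ, 0 < δ → ∃ T : ℝ, 1 ≤ T ∧
      ∀ t, T ≤ t → |φ t - C * t ^ (-α)| ≤ δ * (C * t ^ (-α)) := by
    intro δ hδ
    obtain ⟨a, ha⟩ := eventually_atTop.mp (Metric.tendsto_nhds.mp hasym δ hδ)
    refine ⟨max a 1, le_max_right _ _, fun t ht => ?_⟩
    have ht1 : (1:ℝ) ≤ t := le_trans (le_max_right a 1) ht
    have ht0 : (0:ℝ) < t := lt_of_lt_of_le one_pos ht1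
    have hc : 0 < C * t ^ (-α) := by positivity
    have h := ha t (le_trans (le_max_left a 1) ht)
    rw [Real.dist_eq, div_sub_one hc.ne', abs_div, abs_of_pos hc, div_lt_iff₀ hc] at h
    linarith
  obtain ⟨T₀, hT₀1, hT₀b⟩ := H1 1 one_pos
  have hT₀0 : (0:ℝ) < T₀ := lt_of_lt_of_le one_pos hT₀1
  -- φ integrable on Ioc 0 b
  have hφIoc : ∀ b : ℝ, 1 ≤ b → IntegrableOn φ (Ioc (0:ℝ) b) := by
    intro b hb
    have h2 : IntegrableOn φ (Icc (1:ℝ) b) :=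
      (hcont.mono (fun x hx => lt_of_lt_of_le one_pos hx.1)).integrableOn_Icc
    have := hint0.union (h2.mono_set Ioc_subset_Icc_self)
    rwa [Ioc_union_Ioc_eq_Ioc (by norm_num) hb] at this
  -- continuity of φ/(l+t)
  have hcont2 : ∀ l : ℝ, 0 < l → ContinuousOn (fun t => φ t / (l + t)) (Ioi (0:ℝ)) := by
    intro l hl
    exact hcont.div (continuous_const.add continuous_id).continuousOn
      (fun t ht => by have : (0:ℝ) < t := ht; positivity)
  -- integrability of t^{-α} on Ioc 0 b
  have hrInt : ∀ b : ℝ, IntegrableOn (fun t : ℝ => t ^ (-α)) (Ioc (0:ℝ) b) :=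
    fun b => (intervalIntegral.intervalIntegrable_rpow' (a := (0:ℝ)) (b := b)
      (r := -α) (by linarith)).1
  -- integrability of φ/(l+t)
  have I2 : ∀ l : ℝ, 0 < l → IntegrableOn (fun t => φ t / (l + t)) (Ioi (0:ℝ)) := by
    intro l hl
    have head : IntegrableOn (fun t => φ t / (l + t)) (Ioc (0:ℝ) T₀) := by
      refine ((hφIoc T₀ hT₀1).mul_const l⁻¹).mono'
        (((hcont2 l hl).mono (fun x hx => hx.1)).aestronglyMeasurable measurableSet_Ioc) ?_
      filter_upwards [ae_restrict_mem measurableSet_Ioc] with t ht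
      have ht0 : (0:ℝ) < t := ht.1
      have hφ0 := hpos t ht0
      rw [Real.norm_eq_abs, abs_of_nonneg (by positivity), div_eq_mul_inv]
      gcongr
      linarith
    have tail : IntegrableOn (fun t => φ t / (l + t)) (Ioi T₀) := by
      have hi : IntegrableOn (fun t : ℝ => 2 * C * t ^ (-α - 1)) (Ioi T₀) :=
        (integrableOn_Ioi_rpow_of_lt (by linarith) hT₀0).const_mul _
      refine hi.mono'
        (((hcont2 l hl).mono (fun x hx => lt_trans hT₀0 hx)).aestronglyMeasurable
          measurableSet_Ioi) ?_
      filter_upwards [ae_restrict_mem measurableSet_Ioi] with t ht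
      have ht0 : (0:ℝ) < t := lt_trans hT₀0 ht
      have hφ0 := hpos t ht0
      have hb := hT₀b t (le_of_lt ht)
      have hub : φ t ≤ 2 * C * t ^ (-α) := by
        have := (abs_le.mp hb).2
        nlinarith
      rw [Real.norm_eq_abs, abs_of_nonneg (by positivity), Real.rpow_sub ht0, Real.rpow_one]
      have h2 : φ t / (l + t) ≤ (2 * C * t ^ (-α)) / t :=
        div_le_div₀ (by positivity) hub ht0 (by linarith)
      rwa [mul_div_assoc] at h2
    have := head.union tail
    rwa [Ioc_union_Ioi_eq_Ioi hT₀0.le] at this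
  -- integrability of (φ - C t^{-α})/(l+t)
  have I3 : ∀ l : ℝ, 0 < l →
      IntegrableOn (fun t => (φ t - C * t ^ (-α)) / (l + t)) (Ioi (0:ℝ)) := by
    intro l hl
    have h := (I2 l hl).sub ((rint hα0 hα1 hl).const_mul C)
    refine h.congr (Eventually.of_forall fun t => ?_)
    simp only [Pi.sub_apply]
    rw [sub_div, mul_div_assoc]
  -- split identity
  have hsplitid : ∀ l : ℝ, 0 < l →
      (∫ t in Ioi (0:ℝ), (φ t - C * t ^ (-α)) / (l + t)) * l ^ α + C * S
      = (∫ t in Ioi (0:ℝ), φ t / (l + t)) * l ^ α := by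
    intro l hl
    have e : (fun t : ℝ => φ t / (l + t))
        = (fun t => (φ t - C * t ^ (-α)) / (l + t) + C * (t ^ (-α) / (l + t))) := by
      funext t
      rw [sub_div, mul_div_assoc]
      ring
    have hint : ∫ t in Ioi (0:ℝ), φ t / (l + t)
        = (∫ t in Ioi (0:ℝ), (φ t - C * t ^ (-α)) / (l + t))
          + C * (l ^ (-α) * S) := by
      rw [e, integral_add (I3 l hl) ((rint hα0 hα1 hl).const_mul C), integral_const_mul,
        rval α hα0 hα1 hl]
    have hll : l ^ (-α) * l ^ α = 1 := by
      rw [← Real.rpow_add hl]; simp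
    rw [hint, add_mul]
    have : C * (l ^ (-α) * S) * l ^ α = C * S * (l ^ (-α) * l ^ α) := by ring
    rw [this, hll, mul_one]
  -- the error term tends to 0
  have hF : Tendsto (fun l : ℝ =>
      (∫ t in Ioi (0:ℝ), (φ t - C * t ^ (-α)) / (l + t)) * l ^ α) atTop (𝓝 0) := by
    rw [NormedAddCommGroup.tendsto_nhds_zero]
    intro ε hε
    set δ := ε / (2 * (C * S + 1)) with hδdef
    have hCS : (0:ℝ) < C * S + 1 := by positivity
    have hδ : 0 < δ := by positivity
    obtain ⟨T, hT1, hTb⟩ := H1 δ hδ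
    have hT0 : (0:ℝ) < T := lt_of_lt_of_le one_pos hT1
    set M := ∫ t in Ioc (0:ℝ) T, ‖φ t - C * t ^ (-α)‖ with hMdef
    have hgInt : IntegrableOn (fun t => φ t - C * t ^ (-α)) (Ioc (0:ℝ) T) :=
      (hφIoc T hT1).sub ((hrInt T).const_mul C)
    have hsmall : Tendsto (fun l : ℝ => l ^ (α - 1) * M) atTop (𝓝 0) := by
      have h := (tendsto_rpow_neg_atTop (by linarith : (0:ℝ) < 1 - α)).mul_const M
      rw [zero_mul] at h
      refine h.congr (fun l => ?_)
      rw [show -(1 - α) = α - 1 by ring]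
    filter_upwards [eventually_ge_atTop (1:ℝ),
      hsmall.eventually_lt_const (by positivity : (0:ℝ) < ε / 2)] with l hl1 hlsm
    have hl0 : (0:ℝ) < l := lt_of_lt_of_le one_pos hl1
    have hA : IntegrableOn (fun t => (φ t - C * t ^ (-α)) / (l + t)) (Ioc (0:ℝ) T) :=
      (I3 l hl0).mono_set (fun x hx => hx.1)
    have hB : IntegrableOn (fun t => (φ t - C * t ^ (-α)) / (l + t)) (Ioi T) :=
      (I3 l hl0).mono_set (Ioi_subset_Ioi hT0.le)
    have hsplit : ∫ t in Ioi (0:ℝ), (φ t - C * t ^ (-α)) / (l + t)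
        = (∫ t in Ioc (0:ℝ) T, (φ t - C * t ^ (-α)) / (l + t))
          + ∫ t in Ioi T, (φ t - C * t ^ (-α)) / (l + t) := by
      rw [← setIntegral_union (Ioc_disjoint_Ioi le_rfl) measurableSet_Ioi hA hB,
        Ioc_union_Ioi_eq_Ioi hT0.le]
    have hAb : ‖∫ t in Ioc (0:ℝ) T, (φ t - C * t ^ (-α)) / (l + t)‖ ≤ M * l⁻¹ := by
      calc ‖∫ t in Ioc (0:ℝ) T, (φ t - C * t ^ (-α)) / (l + t)‖
          ≤ ∫ t in Ioc (0:ℝ) T, ‖(φ t - C * t ^ (-α)) / (l + t)‖ :=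
            norm_integral_le_integral_norm _
        _ ≤ ∫ t in Ioc (0:ℝ) T, ‖φ t - C * t ^ (-α)‖ * l⁻¹ := by
            refine setIntegral_mono_on hA.norm (hgInt.norm.mul_const _)
              measurableSet_Ioc (fun t ht => ?_)
            have ht0 : (0:ℝ) < t := ht.1
            rw [norm_div, Real.norm_eq_abs (l + t), abs_of_pos (by positivity),
              ← div_eq_mul_inv]
            gcongr
            linarith
        _ = M * l⁻¹ := by rw [hMdef, ← integral_mul_const]
    have hBb : ‖∫ t in Ioi T, (φ t - C * t ^ (-α)) / (l + t)‖
        ≤ δ * C * (l ^ (-α) * S) := by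
      calc ‖∫ t in Ioi T, (φ t - C * t ^ (-α)) / (l + t)‖
          ≤ ∫ t in Ioi T, ‖(φ t - C * t ^ (-α)) / (l + t)‖ :=
            norm_integral_le_integral_norm _
        _ ≤ ∫ t in Ioi T, δ * C * (t ^ (-α) / (l + t)) := by
            refine setIntegral_mono_on hB.norm
              (IntegrableOn.mono_set ((rint hα0 hα1 hl0).const_mul (δ * C))
                (Ioi_subset_Ioi hT0.le))
              measurableSet_Ioi (fun t ht => ?_)
            have ht0 : (0:ℝ) < t := lt_trans hT0 ht
            have hb := hTb t (le_of_lt ht)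
            rw [norm_div, Real.norm_eq_abs, Real.norm_eq_abs (l + t),
              abs_of_pos (by positivity : (0:ℝ) < l + t)]
            calc |φ t - C * t ^ (-α)| / (l + t) ≤ δ * (C * t ^ (-α)) / (l + t) := by gcongr
              _ = δ * C * (t ^ (-α) / (l + t)) := by ring
        _ ≤ ∫ t in Ioi (0:ℝ), δ * C * (t ^ (-α) / (l + t)) := by
            refine setIntegral_mono_set ((rint hα0 hα1 hl0).const_mul (δ * C)) ?_
              (HasSubset.Subset.eventuallyLE (Ioi_subset_Ioi hT0.le))
            filter_upwards [ae_restrict_mem measurableSet_Ioi] with t ht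
            have ht0 : (0:ℝ) < t := ht
            positivity
        _ = δ * C * (l ^ (-α) * S) := by rw [integral_const_mul, rval α hα0 hα1 hl0]
    have hδCS : δ * (C * S) ≤ ε / 2 := by
      have heq : δ * (C * S + 1) = ε / 2 := by
        rw [hδdef]; field_simp
      nlinarith
    calc ‖(∫ t in Ioi (0:ℝ), (φ t - C * t ^ (-α)) / (l + t)) * l ^ α‖
        = ‖∫ t in Ioi (0:ℝ), (φ t - C * t ^ (-α)) / (l + t)‖ * l ^ α := by
          rw [norm_mul, Real.norm_eq_abs (l ^ α), abs_of_nonneg (Real.rpow_nonneg hl0.le α)]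
      _ ≤ (M * l⁻¹ + δ * C * (l ^ (-α) * S)) * l ^ α := by
          apply mul_le_mul_of_nonneg_right ?_ (Real.rpow_nonneg hl0.le α)
          rw [hsplit]
          exact (norm_add_le _ _).trans (add_le_add hAb hBb)
      _ = l ^ (α - 1) * M + δ * (C * S) * (l ^ (-α) * l ^ α) := by
          rw [Real.rpow_sub hl0, Real.rpow_one]
          ring
      _ = l ^ (α - 1) * M + δ * (C * S) := by
          rw [← Real.rpow_add hl0]; simp
      _ < ε / 2 + ε / 2 := add_lt_add_of_lt_of_le hlsm hδCS
      _ = ε := add_halves ε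
  -- conclude
  have hfinal := hF.add_const (C * S)
  rw [zero_add] at hfinal
  have hval : C * S = C * π / Real.sin (π * α) := by rw [hSdef, mul_div_assoc]
  rw [hval] at hfinal
  refine hfinal.congr' ?_
  filter_upwards [eventually_gt_atTop (0:ℝ)] with l hl
  rw [← hval]
  exact hsplitid l hl
end

section
/- The exponential integral E₁(x) = ∫_x^∞ t^{-1} e^{-t} dt satisfies E₁(x) + log x → -κ as x → 0⁺, where κ is the Euler–Mascheroni constant. -/
open MeasureTheory Real Set Filter Topology

/-- The exponential integral `E₁(x) = ∫ x^∞ e^(-t)/t dt`. -/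
noncomputable def expIntegralE1 (x : ℝ) : ℝ :=
  ∫ t in Ioi x, Real.exp (-t) / t

/-- The key value: `∫_0^∞ log t · e^{-t} dt = -γ`, obtained from `Γ'(1) = -γ`. -/
lemma logExp_integral_eq :
    ∫ t in Ioi (0:ℝ), Real.log t * Real.exp (-t) = -Real.eulerMascheroniConstant := by
  have h1 := Complex.hasDerivAt_GammaIntegral (s := 1) (by norm_num)
  have heq : Complex.Gamma =ᶠ[𝓝 (1:ℂ)] Complex.GammaIntegral := by
    have hmem : {s : ℂ | 0 < s.re} ∈ 𝓝 (1:ℂ) := by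
      refine IsOpen.mem_nhds (isOpen_lt continuous_const Complex.continuous_re) ?_
      simp
    filter_upwards [hmem] with s hs
    exact Complex.Gamma_eq_integral hs
  have h2 : HasDerivAt Complex.Gamma
      (∫ t : ℝ in Ioi 0, (t : ℂ) ^ ((1:ℂ) - 1) * (Real.log t * Real.exp (-t))) 1 :=
    h1.congr_of_eventuallyEq heq
  have h3 := h2.unique Complex.hasDerivAt_Gamma_one
  have h4 : (∫ t : ℝ in Ioi 0, (t : ℂ) ^ ((1:ℂ) - 1) * (Real.log t * Real.exp (-t)))
      = ∫ t : ℝ in Ioi 0, ((Real.log t * Real.exp (-t) : ℝ) : ℂ) := by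
    refine integral_congr_ae (Eventually.of_forall fun t => ?_)
    push_cast
    rw [sub_self, Complex.cpow_zero, one_mul]
  have h5 : (∫ t : ℝ in Ioi 0, ((Real.log t * Real.exp (-t) : ℝ) : ℂ))
      = ((∫ t : ℝ in Ioi 0, Real.log t * Real.exp (-t) : ℝ) : ℂ) := integral_ofReal
  rw [h4, h5] at h3
  exact_mod_cast h3

lemma integrableOn_logExp :
    IntegrableOn (fun t => Real.log t * Real.exp (-t)) (Ioi (0:ℝ)) := by
  by_contra h
  have h0 := logExp_integral_eq
  rw [MeasureTheory.integral_undef h] at h0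
  have := Real.one_half_lt_eulerMascheroniConstant
  linarith

lemma integrableOn_expDiv {x : ℝ} (hx : 0 < x) :
    IntegrableOn (fun t => Real.exp (-t) / t) (Ioi x) := by
  have h1 : IntegrableOn (fun t : ℝ => Real.exp (-t) / x) (Ioi x) := by
    have := (exp_neg_integrableOn_Ioi x (zero_lt_one)).div_const x
    simp only [neg_mul, one_mul] at this
    exact this
  refine h1.mono' ?_ ?_
  · refine (ContinuousOn.aestronglyMeasurable ?_ measurableSet_Ioi)
    exact ContinuousOn.div (Real.continuous_exp.comp continuous_neg).continuousOn
      continuousOn_id (fun t ht => (hx.trans ht).ne')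
  · filter_upwards [ae_restrict_mem measurableSet_Ioi] with t ht
    have htpos : 0 < t := hx.trans ht
    rw [Real.norm_eq_abs, abs_of_nonneg (by positivity)]
    exact div_le_div_of_nonneg_left (Real.exp_pos _).le hx (le_of_lt ht)

/-- Integration by parts on `(x, ∞)`. -/
lemma parts {x : ℝ} (hx : 0 < x) :
    (∫ t in Ioi x, Real.log t * Real.exp (-t))
      = Real.exp (-x) * Real.log x + ∫ t in Ioi x, Real.exp (-t) / t := by
  set f' : ℝ → ℝ := fun t => Real.log t * Real.exp (-t) - Real.exp (-t) / t with hf'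
  have hint1 : IntegrableOn (fun t => Real.log t * Real.exp (-t)) (Ioi x) :=
    integrableOn_logExp.mono_set (Ioi_subset_Ioi hx.le)
  have hint2 := integrableOn_expDiv hx
  have hderiv : ∀ t ∈ Ici x, HasDerivAt (fun t => -(Real.exp (-t) * Real.log t)) (f' t) t := by
    intro t ht
    have htpos : 0 < t := lt_of_lt_of_le hx ht
    have h1 : HasDerivAt (fun t : ℝ => Real.exp (-t)) (-Real.exp (-t)) t := by
      simpa using ((hasDerivAt_neg t).exp)
    have h2 := (h1.mul (Real.hasDerivAt_log htpos.ne')).neg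
    refine h2.congr_deriv ?_
    show _ = Real.log t * Real.exp (-t) - Real.exp (-t) / t
    ring
  have htop : Tendsto (fun t => -(Real.exp (-t) * Real.log t)) atTop (𝓝 0) := by
    rw [← neg_zero]
    refine Tendsto.neg ?_
    refine squeeze_zero_norm' ?_ (tendsto_pow_mul_exp_neg_atTop_nhds_zero 1)
    filter_upwards [eventually_ge_atTop (1:ℝ)] with t ht
    rw [Real.norm_eq_abs, abs_mul, abs_of_nonneg (Real.exp_pos _).le,
      abs_of_nonneg (Real.log_nonneg ht), pow_one, mul_comm (Real.exp (-t))]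
    exact mul_le_mul_of_nonneg_right (Real.log_le_sub_one_of_pos (by linarith)
      |>.trans (by linarith)) (Real.exp_pos _).le
  have key := integral_Ioi_of_hasDerivAt_of_tendsto' hderiv (hint1.sub hint2) htop
  rw [MeasureTheory.integral_sub hint1 hint2] at key
  have : -(Real.exp (-x) * Real.log x) = -(Real.exp (-x) * Real.log x) := rfl
  rw [zero_sub, neg_neg] at key
  linarith [key]

lemma tendsto_tail :
    Tendsto (fun x => ∫ t in Ioi x, Real.log t * Real.exp (-t)) (𝓝[>] (0:ℝ))
      (𝓝 (∫ t in Ioi (0:ℝ), Real.log t * Real.exp (-t))) := by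
  set g : ℝ → ℝ := fun t => Real.log t * Real.exp (-t) with hg
  have main : Tendsto (fun x => ∫ t, (Ioi x).indicator g t ∂(volume.restrict (Ioi 0)))
      (𝓝[>] (0:ℝ)) (𝓝 (∫ t in Ioi (0:ℝ), g t)) := by
    refine tendsto_integral_filter_of_dominated_convergence (fun t => ‖g t‖)
      ?_ ?_ integrableOn_logExp.norm ?_
    · refine Eventually.of_forall fun x => ?_
      exact integrableOn_logExp.aestronglyMeasurable.indicator measurableSet_Ioi
    · exact Eventually.of_forall fun x =>
        Eventually.of_forall fun t => norm_indicator_le_norm_self g t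
    · filter_upwards [ae_restrict_mem measurableSet_Ioi] with t ht
      have : ∀ᶠ x in 𝓝[>] (0:ℝ), (Ioi x).indicator g t = g t := by
        filter_upwards [Ioo_mem_nhdsGT_of_mem ⟨le_refl (0:ℝ), ht⟩] with x hx
        exact indicator_of_mem (hx.2 : x < t) g
      exact Tendsto.congr' (this.mono fun x hx => hx.symm) tendsto_const_nhds
  refine main.congr' ?_
  filter_upwards [self_mem_nhdsWithin] with x (hx : 0 < x)
  rw [integral_indicator measurableSet_Ioi, Measure.restrict_restrict measurableSet_Ioi,
    Set.inter_eq_left.mpr (Ioi_subset_Ioi hx.le)]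

lemma tendsto_one_sub_exp_mul_log :
    Tendsto (fun x => (1 - Real.exp (-x)) * Real.log x) (𝓝[>] (0:ℝ)) (𝓝 0) := by
  have hlog := tendsto_log_mul_rpow_nhdsGT_zero zero_lt_one
  have hg0 : Tendsto (fun x => |Real.log x * x ^ (1:ℝ)|) (𝓝[>] (0:ℝ)) (𝓝 0) := by
    simpa using hlog.abs
  refine squeeze_zero_norm' ?_ hg0
  filter_upwards [self_mem_nhdsWithin] with x (hx : 0 < x)
  have h1 : |1 - Real.exp (-x)| ≤ x := by
    have h2 : Real.exp (-x) ≤ 1 := Real.exp_le_one_iff.mpr (by linarith)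
    have h3 := Real.add_one_le_exp (-x)
    rw [abs_of_nonneg (by linarith)]; linarith
  calc ‖(1 - Real.exp (-x)) * Real.log x‖
      = |1 - Real.exp (-x)| * |Real.log x| := by rw [Real.norm_eq_abs, abs_mul]
    _ ≤ x * |Real.log x| := mul_le_mul_of_nonneg_right h1 (abs_nonneg _)
    _ = |Real.log x * x ^ (1:ℝ)| := by
        rw [abs_mul, Real.rpow_one, mul_comm, abs_of_pos hx]

theorem expIntegralE1_add_log_tendsto :
    Tendsto (fun x => expIntegralE1 x + Real.log x) (𝓝[>] (0:ℝ))
      (𝓝 (-Real.eulerMascheroniConstant)) := by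
  have h := tendsto_tail.add tendsto_one_sub_exp_mul_log
  rw [logExp_integral_eq, add_zero] at h
  refine h.congr' ?_
  filter_upwards [self_mem_nhdsWithin] with x (hx : 0 < x)
  have hp := parts hx
  unfold expIntegralE1
  ring_nf
  simp only [div_eq_mul_inv] at hp
  nlinarith [hp]
end
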